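/- Let C = (c_{i,j}) and D = (d_{i,j}) be n×n matrices of nonnegative integers. If the inequality ∏_{i,j} a_{i,j}^{c_{i,j}} ≥ ∏_{i,j} a_{i,j}^{d_{i,j}} holds for every totally nonnegative n×n real matrix A = (a_{i,j}), then C and D have equal row sums and equal column sums: ∑_j c_{i,j} = ∑_j d_{i,j} for every i, and ∑_i c_{i,j} = ∑_i d_{i,j} for every j. -/

import Mathlib

open Matrix BigOperators

/-- An `n × n` real matrix is totally nonnegative if all its minors are nonnegative. -/
def TotallyNonneg {n : ℕ} (A : Matrix (Fin n) (Fin n) ℝ) : Prop :=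
  ∀ (k : ℕ) (f g : Fin k → Fin n), StrictMono f → StrictMono g →
    0 ≤ (A.submatrix f g).det

lemma tn_rowconst {n : ℕ} (w : Fin n → ℝ) (hw : ∀ i, 0 ≤ w i) :
    TotallyNonneg (Matrix.of fun i _ => w i) := by
  intro k f g _ _
  match k with
  | 0 => simp [Matrix.det_fin_zero]
  | 1 => simp [Matrix.det_fin_one, Matrix.submatrix_apply, hw]
  | k + 2 =>
    have : ((Matrix.of fun i _ => w i : Matrix (Fin n) (Fin n) ℝ).submatrix f g).det = 0 := by
      apply Matrix.det_zero_of_column_eq (i := 0) (j := 1)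
      · exact Fin.zero_ne_one
      · intro s; rfl
    simp [this]

lemma tn_colconst {n : ℕ} (w : Fin n → ℝ) (hw : ∀ i, 0 ≤ w i) :
    TotallyNonneg (Matrix.of fun _ j => w j) := by
  intro k f g _ _
  match k with
  | 0 => simp [Matrix.det_fin_zero]
  | 1 => simp [Matrix.det_fin_one, Matrix.submatrix_apply, hw]
  | k + 2 =>
    have : ((Matrix.of fun _ j => w j : Matrix (Fin n) (Fin n) ℝ).submatrix f g).det = 0 := by
      apply Matrix.det_zero_of_row_eq (i := 0) (j := 1)
      · exact Fin.zero_ne_one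
      · rfl
    simp [this]

lemma nat_eq_of_pow_le {c d : ℕ} (H : ∀ t : ℝ, 0 < t → (t : ℝ) ^ d ≤ t ^ c) : c = d := by
  have h1 : (2 : ℝ) ^ d ≤ 2 ^ c := H 2 (by norm_num)
  have h2 : ((1 : ℝ) / 2) ^ d ≤ (1 / 2) ^ c := H (1 / 2) (by norm_num)
  have hdc : d ≤ c := (pow_le_pow_iff_right₀ (by norm_num : (1:ℝ) < 2)).mp h1
  have hcd : c ≤ d := by
    by_contra hlt
    push_neg at hlt
    have := pow_lt_pow_right_of_lt_one₀ (by norm_num : (0:ℝ) < 1/2) (by norm_num : (1:ℝ)/2 < 1) hlt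
    linarith
  omega

theorem stmt3 (n : ℕ) (C D : Matrix (Fin n) (Fin n) ℕ)
    (h : ∀ A : Matrix (Fin n) (Fin n) ℝ, TotallyNonneg A →
      (∏ i, ∏ j, A i j ^ D i j) ≤ ∏ i, ∏ j, A i j ^ C i j) :
    (∀ i, ∑ j, C i j = ∑ j, D i j) ∧ (∀ j, ∑ i, C i j = ∑ i, D i j) := by
  constructor
  · intro i0
    apply nat_eq_of_pow_le
    intro t ht
    have key := h (Matrix.of fun i _ => if i = i0 then t else 1)
      (tn_rowconst _ (fun i => by split <;> [exact ht.le; norm_num]))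
    have comp : ∀ E : Matrix (Fin n) (Fin n) ℕ,
        (∏ i, ∏ j, (Matrix.of fun i _ => if i = i0 then t else 1 : Matrix (Fin n) (Fin n) ℝ) i j ^ E i j)
          = t ^ (∑ j, E i0 j) := by
      intro E
      have : ∀ i, (∏ j, (Matrix.of fun i _ => if i = i0 then t else 1 : Matrix (Fin n) (Fin n) ℝ) i j ^ E i j)
          = (if i = i0 then t else 1) ^ (∑ j, E i j) := by
        intro i
        simp [Finset.prod_pow_eq_pow_sum]
      rw [Finset.prod_congr rfl (fun i _ => this i)]
      rw [Finset.prod_eq_single i0 (fun i _ hi => by simp [hi]) (by simp)]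
      simp
    rw [comp C, comp D] at key
    exact key
  · intro j0
    apply nat_eq_of_pow_le
    intro t ht
    have key := h (Matrix.of fun _ j => if j = j0 then t else 1)
      (tn_colconst _ (fun j => by split <;> [exact ht.le; norm_num]))
    have comp : ∀ E : Matrix (Fin n) (Fin n) ℕ,
        (∏ i, ∏ j, (Matrix.of fun _ j => if j = j0 then t else 1 : Matrix (Fin n) (Fin n) ℝ) i j ^ E i j)
          = t ^ (∑ i, E i j0) := by
      intro E
      rw [Finset.prod_comm]
      have : ∀ j, (∏ i, (Matrix.of fun _ j => if j = j0 then t else 1 : Matrix (Fin n) (Fin n) ℝ) i j ^ E i j)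
          = (if j = j0 then t else 1) ^ (∑ i, E i j) := by
        intro j
        simp [Finset.prod_pow_eq_pow_sum]
      rw [Finset.prod_congr rfl (fun j _ => this j)]
      rw [Finset.prod_eq_single j0 (fun j _ hj => by simp [hj]) (by simp)]
      simp
    rw [comp C, comp D] at key
    exact key
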